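/- arXiv:1204.3113 — 2 statements merged into one kernel-verified Lean document; each statement's English description precedes it below -/
import Mathlib

section
/- (Lemma 2) Let G be a DAG, T_s a DFS arborescence rooted at s, s1 a child of s, u, v ∈ T_{s1}, and z = LCA_{T_s}(u,v) with z ≠ u and z ≠ v. Then s ∈ J(u,v) if and only if s ∈ J(z,u) or s ∈ J(z,v). -/
variable {V : Type*}

/-- A directed graph (given as a relation) is acyclic: no nontrivial closed directed walk. -/
def Acyclic (G : V → V → Prop) : Prop := Irreflexive (Relation.TransGen G)

/-- `l` is a directed path in `G` from `a` to `b`: consecutive vertices are joined by arcs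
of `G` and no vertex is repeated. -/
def IsDipath (G : V → V → Prop) (l : List V) (a b : V) : Prop :=
  l.Chain' G ∧ l.head? = some a ∧ l.getLast? = some b ∧ l.Nodup

/-- The internal vertices of a path (all vertices except the two endpoints). -/
def internalVerts (l : List V) : List V := l.tail.dropLast

/-- `s` is a junction of the pair of distinct vertices `u, v` in `G`: there are directed
paths from `s` to `u` and from `s` to `v` sharing no vertex other than `s`. -/
def IsJunction (G : V → V → Prop) (s u v : V) : Prop :=
  u ≠ v ∧ ∃ p q : List V, IsDipath G p s u ∧ IsDipath G q s v ∧
    ∀ x, x ∈ p → x ∈ q → x = s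

/-- `z` is the lowest common ancestor of `u` and `v` in the tree (arborescence) `T`:
a common ancestor that is a descendant of every common ancestor. -/
def IsTreeLCA (T : V → V → Prop) (u v z : V) : Prop :=
  Relation.ReflTransGen T z u ∧ Relation.ReflTransGen T z v ∧
    ∀ y, Relation.ReflTransGen T y u → Relation.ReflTransGen T y v →
      Relation.ReflTransGen T y z

/-- `s` is a lowest common ancestor of `u, v` in the DAG `G`: a junction of `u, v` such
that there is no directed path from `s` to any other junction of `u, v`. -/
def IsLCA (G : V → V → Prop) (s u v : V) : Prop :=
  IsJunction G s u v ∧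
    ∀ s', s' ≠ s → IsJunction G s' u v → ¬ Relation.TransGen G s s'

/-- A DFS arborescence of `G` rooted at `s`, spanning all descendants of `s`, together
with its post-order numbering and the standard structural properties of depth-first
search: tree arcs are graph arcs, the root has no parent, parents are unique, every
`G`-descendant of `s` is in the tree, `post` is injective on the tree, `post` strictly
decreases from a vertex to its proper tree descendants, the post-order numbers of each
subtree form a contiguous interval, and every graph arc between tree vertices is a
tree/forward arc, a back arc, or a (post-order decreasing) cross arc. -/
structure DFSArborescence (G : V → V → Prop) (s : V) where
  T : V → V → Prop
  post : V → ℕ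
  sub : ∀ ⦃a b⦄, T a b → G a b
  root_no_parent : ∀ a, ¬ T a s
  unique_parent : ∀ ⦃a b c⦄, T a b → T c b → a = c
  verts_reach : ∀ ⦃a b⦄, T a b → Relation.ReflTransGen T s a
  spans : ∀ ⦃v⦄, Relation.ReflTransGen G s v → Relation.ReflTransGen T s v
  post_inj : ∀ ⦃u v⦄, Relation.ReflTransGen T s u → Relation.ReflTransGen T s v →
      post u = post v → u = v
  post_desc : ∀ ⦃u v⦄, Relation.ReflTransGen T s u → Relation.TransGen T u v →
      post v < post u
  post_contig : ∀ ⦃u v x⦄, Relation.ReflTransGen T s u → Relation.ReflTransGen T u v →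
      Relation.ReflTransGen T s x → post v ≤ post x → post x ≤ post u →
      Relation.ReflTransGen T u x
  arc_classify : ∀ ⦃u v⦄, G u v → Relation.ReflTransGen T s u →
      Relation.ReflTransGen T s v →
      Relation.ReflTransGen T u v ∨ Relation.ReflTransGen T v u ∨ post v < post u



section helpers
variable {R S : V → V → Prop}

lemma chain'_imp_mem {l : List V} (h : l.Chain' R)
    (himp : ∀ a ∈ l, ∀ b ∈ l, R a b → S a b) : l.Chain' S := by
  induction l with
  | nil => exact List.isChain_nil
  | cons a t ih =>
    match t, h with
    | [], _ => exact List.isChain_singleton _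
    | b :: t', h =>
      rw [List.Chain', List.isChain_cons_cons] at h ⊢
      refine ⟨himp _ (by simp) _ (by simp) h.1, ih h.2 ?_⟩
      intro x hx y hy
      exact himp x (List.mem_cons_of_mem _ hx) y (List.mem_cons_of_mem _ hy)

lemma rtg_of_mem_chain' {l : List V} {a : V} (h : l.Chain' R) (hh : l.head? = some a) :
    ∀ x ∈ l, Relation.ReflTransGen R a x := by
  induction l generalizing a with
  | nil => simp
  | cons b t ih =>
    simp only [List.head?_cons, Option.some.injEq] at hh
    subst hh
    intro x hx
    rcases List.mem_cons.mp hx with rfl | hx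
    · exact Relation.ReflTransGen.refl
    · match t, h, hx with
      | c :: t', h, hx =>
        rw [List.Chain', List.isChain_cons_cons] at h
        exact (Relation.ReflTransGen.single h.1).trans (ih h.2 rfl x hx)

lemma exists_dipath_rtg {a b : V} (h : Relation.ReflTransGen R a b) :
    ∃ l : List V, l.Chain' R ∧ l.head? = some a ∧ l.getLast? = some b := by
  induction h with
  | refl => exact ⟨[a], List.isChain_singleton _, by simp, by simp⟩
  | @tail b' c' hac hcb ih =>
    obtain ⟨l, hc, hh, hl⟩ := ih
    have hne : l ≠ [] := by rintro rfl; simp at hh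
    refine ⟨l ++ [c'], ?_, ?_, ?_⟩
    · refine List.IsChain.append hc (by simp) ?_
      intro x hx y hy
      simp only [List.head?_cons, Option.mem_def, Option.some.injEq] at hy
      rw [hl] at hx
      simp only [Option.mem_def, Option.some.injEq] at hx
      subst hx; subst hy; exact hcb
    · rw [List.head?_append, hh]; rfl
    · simp [List.getLast?_append]

/-- last element of a list satisfying `p`, with everything after it not satisfying `p`. -/
lemma exists_last_sat {p : V → Prop} {l : List V} (h : ∃ x ∈ l, p x) :
    ∃ l1 w l2, l = l1 ++ w :: l2 ∧ p w ∧ ∀ x ∈ l2, ¬ p x := by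
  classical
  induction l using List.reverseRecOn with
  | nil => simp at h
  | append_singleton l' a ih =>
    by_cases hpa : p a
    · exact ⟨l', a, [], by simp, hpa, by simp⟩
    · obtain ⟨x, hx, hpx⟩ := h
      rw [List.mem_append] at hx
      rcases hx with hx | hx
      · obtain ⟨l1, w, l2, rfl, hpw, hl2⟩ := ih ⟨x, hx, hpx⟩
        refine ⟨l1, w, l2 ++ [a], by simp, hpw, ?_⟩
        intro y hy
        rcases List.mem_append.mp hy with hy | hy
        · exact hl2 y hy
        · simp only [List.mem_singleton] at hy; subst hy; exact hpa
      · simp only [List.mem_singleton] at hx; subst hx; exact absurd hpx hpa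

end helpers

section dfs

lemma tg_of_rtg_ne {R : V → V → Prop} {a b : V} (h : Relation.ReflTransGen R a b)
    (hne : a ≠ b) : Relation.TransGen R a b := by
  rcases h.cases_head with rfl | ⟨c, h1, h2⟩
  · exact absurd rfl hne
  · exact Relation.TransGen.head' h1 h2

variable {G : V → V → Prop} {s : V} (A : DFSArborescence G s)

lemma arc_post (hG : Acyclic G) {a b : V} (hab : G a b)
    (ha : Relation.ReflTransGen A.T s a) (hb : Relation.ReflTransGen A.T s b) :
    A.post b < A.post a := by
  have hne : a ≠ b := by rintro rfl; exact hG a (Relation.TransGen.single hab)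
  rcases A.arc_classify hab ha hb with h | h | h
  · exact A.post_desc ha (tg_of_rtg_ne h hne)
  · exact absurd ((Relation.TransGen.single hab).trans
      (Relation.TransGen.mono (fun _ _ hh => A.sub hh) _ _ (tg_of_rtg_ne h hne.symm))) (hG a)
  · exact h

lemma sub_post_le {z x : V} (hz : Relation.ReflTransGen A.T s z)
    (hx : Relation.ReflTransGen A.T z x) : A.post x ≤ A.post z := by
  by_cases h : z = x
  · subst h; exact le_rfl
  · exact le_of_lt (A.post_desc hz (tg_of_rtg_ne hx h))

lemma children_disjoint {z : V} (hzr : Relation.ReflTransGen A.T s z) {a b : V}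
    (ha : A.T z a) (hb : A.T z b) (hab : a ≠ b) :
    ∀ x, Relation.ReflTransGen A.T a x → Relation.ReflTransGen A.T b x → False := by
  have key : ∀ a b : V, A.T z a → A.T z b → a ≠ b → A.post b ≤ A.post a →
      ∀ x, Relation.ReflTransGen A.T a x → Relation.ReflTransGen A.T b x → False := by
    intro a b ha hb hab hle x hax hbx
    have hra : Relation.ReflTransGen A.T s a := hzr.tail ha
    have hrb : Relation.ReflTransGen A.T s b := hzr.tail hb
    have hxb : A.post x ≤ A.post b := sub_post_le A hrb hbx
    have hcontig : Relation.ReflTransGen A.T a b := A.post_contig hra hax hrb hxb hle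
    obtain ⟨c, hac, hcb⟩ := Relation.TransGen.tail'_iff.mp (tg_of_rtg_ne hcontig hab)
    have : c = z := A.unique_parent hcb hb
    subst this
    exact absurd (A.post_desc hzr (Relation.TransGen.head' ha hac)) (lt_irrefl _)
  intro x hax hbx
  rcases le_total (A.post b) (A.post a) with h | h
  · exact key a b ha hb hab h x hax hbx
  · exact key b a hb ha hab.symm h x hbx hax

end dfs
section lists
variable {W : Type*}

lemma getLast?_append_right' {l1 l2 : List W} {b : W} (h : l2.getLast? = some b) :
    (l1 ++ l2).getLast? = some b := by
  rw [List.getLast?_append, h]; rfl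

lemma getLast?_of_append {l1 l2 : List W} {b : W} (h : (l1 ++ l2).getLast? = some b)
    (hne : l2 ≠ []) : l2.getLast? = some b := by
  rw [List.getLast?_append] at h
  cases h2 : l2.getLast? with
  | none => exact absurd (List.getLast?_eq_none_iff.mp h2) hne
  | some y => rw [h2] at h; simpa [Option.or] using h

lemma head?_append_left' {l1 l2 : List W} {a : W} (h : l1.head? = some a) :
    (l1 ++ l2).head? = some a := by
  rw [List.head?_append, h]; rfl

lemma ge_last_of_pairwise {l : List W} {f : W → ℕ}
    (hp : l.Pairwise (fun a b => f b < f a)) {b : W} (hl : l.getLast? = some b) :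
    ∀ x ∈ l, f b ≤ f x := by
  obtain ⟨l0, rfl⟩ := List.getLast?_eq_some_iff.mp hl
  rw [List.pairwise_append] at hp
  intro x hx
  rcases List.mem_append.mp hx with hx | hx
  · exact le_of_lt (hp.2.2 x hx b (by simp))
  · simp only [List.mem_singleton] at hx; subst hx; exact le_rfl

lemma nodup_of_pairwise_post {l : List W} {f : W → ℕ}
    (hp : l.Pairwise (fun a b => f b < f a)) : l.Nodup :=
  hp.imp (fun h heq => absurd heq (by rintro rfl; exact lt_irrefl _ h))

end lists

section build
variable {V : Type*} {G : V → V → Prop}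

lemma dipath_append {l1 l2 : List V} {s c b : V}
    (h1 : IsDipath G l1 s c) (hch : (c :: l2).Chain' G)
    (hlast : (c :: l2).getLast? = some b) (hnod : l2.Nodup)
    (hdisj : ∀ x ∈ l2, x ∉ l1) : IsDipath G (l1 ++ l2) s b := by
  obtain ⟨hc1, hh1, hl1, hn1⟩ := h1
  refine ⟨?_, ?_, ?_, ?_⟩
  · refine List.IsChain.append hc1 hch.tail ?_
    intro x hx y hy
    rw [hl1] at hx
    simp only [Option.mem_def, Option.some.injEq] at hx
    subst hx
    exact (List.isChain_cons.mp hch).1 y hy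
  · exact head?_append_left' hh1
  · cases l2 with
    | nil => simpa using hl1.trans (by simpa using hlast)
    | cons y t =>
      refine getLast?_append_right' (getLast?_of_append (l1 := [c]) ?_ (by simp))
      simpa using hlast
  · rw [List.nodup_append]
    exact ⟨hn1, hnod, fun a ha b hb hab => hdisj b hb (hab ▸ ha)⟩

lemma junction_swap {s a b : V} (h : IsJunction G s a b) : IsJunction G s b a := by
  obtain ⟨hne, p, q, hp, hq, hd⟩ := h
  exact ⟨hne.symm, q, p, hq, hp, fun x hx hy => hd x hy hx⟩

lemma jout {s z a b : V} (hzb : z ≠ b) {P Q : List V}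
    (hP : IsDipath G P s a) (hQ : IsDipath G Q s b)
    (hPQ : ∀ x, x ∈ P → x ∈ Q → x = s)
    {w : V} (hw : w ∈ P) {cA : List V}
    (hch : (w :: cA).Chain' G) (hlast : (w :: cA).getLast? = some z)
    (hnod : cA.Nodup) (hcp : ∀ x ∈ cA, x ∉ P) (hcq : ∀ x ∈ cA, x ∉ Q) :
    IsJunction G s z b := by
  obtain ⟨p1, p2, hPeq⟩ := List.append_of_mem hw
  have hpre : (p1 ++ [w]) <+: P := ⟨p2, by rw [hPeq]; simp⟩
  have hP1 : IsDipath G (p1 ++ [w]) s w := by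
    refine ⟨hP.1.prefix hpre, ?_, List.getLast?_concat, hP.2.2.2.sublist hpre.sublist⟩
    have := hP.2.1
    rw [hPeq, List.head?_append] at this
    rw [List.head?_append]
    simpa using this
  have hR : IsDipath G ((p1 ++ [w]) ++ cA) s z := by
    refine dipath_append hP1 hch hlast hnod ?_
    intro x hx hx1
    exact hcp x hx (hpre.sublist.mem hx1)
  refine ⟨hzb, _, Q, hR, hQ, ?_⟩
  intro x hx hxQ
  rcases List.mem_append.mp hx with hx | hx
  · exact hPQ x (hpre.sublist.mem hx) hxQ
  · exact absurd hxQ (hcq x hx)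
end build
section main
variable {V : Type*} {G : V → V → Prop} {s : V}

lemma dipath_facts (A : DFSArborescence G s) (hG : Acyclic G) {l : List V} {a : V}
    (hc : l.Chain' G) (hh : l.head? = some a) (ha : Relation.ReflTransGen A.T s a) :
    (∀ x ∈ l, Relation.ReflTransGen A.T s x) ∧
      l.Pairwise (fun x y => A.post y < A.post x) := by
  have hmem := rtg_of_mem_chain' hc hh
  have hreach : ∀ x ∈ l, Relation.ReflTransGen A.T s x := fun x hx =>
    A.spans ((Relation.ReflTransGen.mono (fun _ _ h => A.sub h) _ _ ha).trans (hmem x hx))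
  refine ⟨hreach, ?_⟩
  haveI : IsTrans V (fun x y => A.post y < A.post x) := ⟨fun _ _ _ h1 h2 => lt_trans h2 h1⟩
  exact List.isChain_iff_pairwise.mp
    (chain'_imp_mem hc (fun p hp q hq hpq => arc_post A hG hpq (hreach p hp) (hreach q hq)))

lemma aux_imp (hG : Acyclic G) (A : DFSArborescence G s) {s1 u v z : V}
    (h1 : A.T s s1)
    (hu : Relation.ReflTransGen A.T s1 u) (hv : Relation.ReflTransGen A.T s1 v)
    (huv : u ≠ v)
    (hzu' : Relation.ReflTransGen A.T z u) (hzv' : Relation.ReflTransGen A.T z v)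
    (hlca : ∀ y, Relation.ReflTransGen A.T y u → Relation.ReflTransGen A.T y v →
      Relation.ReflTransGen A.T y z)
    (hzu : z ≠ u) (hzv : z ≠ v)
    (hJ : IsJunction G s z v) : IsJunction G s u v := by
  classical
  obtain ⟨-, P, Q, hP, hQ, hPQ⟩ := hJ
  have hs1z : Relation.ReflTransGen A.T s1 z := hlca s1 hu hv
  have hreachz : Relation.ReflTransGen A.T s z := (Relation.ReflTransGen.single h1).trans hs1z
  obtain ⟨d1, hzd1, hd1u⟩ := hzu'.cases_head.resolve_left hzu
  obtain ⟨e1, hze1, he1v⟩ := hzv'.cases_head.resolve_left hzv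
  have hreachd1 : Relation.ReflTransGen A.T s d1 := hreachz.tail hzd1
  have hreache1 : Relation.ReflTransGen A.T s e1 := hreachz.tail hze1
  have hd1e1 : d1 ≠ e1 := by
    rintro rfl
    have hdz : Relation.ReflTransGen A.T d1 z := hlca d1 hd1u he1v
    exact absurd (A.post_desc hreachz (Relation.TransGen.head' hzd1 hdz)) (lt_irrefl _)
  have hSubDisj := children_disjoint A hreachz hzd1 hze1 hd1e1
  obtain ⟨du, hduc, hduh, hdul⟩ := exists_dipath_rtg hd1u
  obtain ⟨dv, hdvc, hdvh, hdvl⟩ := exists_dipath_rtg he1v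
  have hduG : du.Chain' G := chain'_imp_mem hduc (fun a _ b _ h => A.sub h)
  have hdvG : dv.Chain' G := chain'_imp_mem hdvc (fun a _ b _ h => A.sub h)
  have hduSub : ∀ x ∈ du, Relation.ReflTransGen A.T d1 x := rtg_of_mem_chain' hduc hduh
  have hdvSub : ∀ x ∈ dv, Relation.ReflTransGen A.T e1 x := rtg_of_mem_chain' hdvc hdvh
  obtain ⟨-, hdupair⟩ := dipath_facts A hG hduG hduh hreachd1
  obtain ⟨-, hdvpair⟩ := dipath_facts A hG hdvG hdvh hreache1
  have hd1z : A.post d1 < A.post z := A.post_desc hreachz (Relation.TransGen.single hzd1)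
  have he1z : A.post e1 < A.post z := A.post_desc hreachz (Relation.TransGen.single hze1)
  have hdu_lt : ∀ x ∈ du, A.post x < A.post z := fun x hx =>
    lt_of_le_of_lt (sub_post_le A hreachd1 (hduSub x hx)) hd1z
  have hdv_lt : ∀ x ∈ dv, A.post x < A.post z := fun x hx =>
    lt_of_le_of_lt (sub_post_le A hreache1 (hdvSub x hx)) he1z
  obtain ⟨hPreach, hPpair⟩ := dipath_facts A hG hP.1 hP.2.1 Relation.ReflTransGen.refl
  obtain ⟨hQreach, hQpair⟩ := dipath_facts A hG hQ.1 hQ.2.1 Relation.ReflTransGen.refl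
  have hPpost : ∀ x ∈ P, A.post z ≤ A.post x := ge_last_of_pairwise hPpair hP.2.2.1
  have hQpost : ∀ x ∈ Q, A.post v ≤ A.post x := ge_last_of_pairwise hQpair hQ.2.2.1
  have hduP : ∀ x ∈ du, x ∉ P := fun x hx hxP =>
    absurd (hPpost x hxP) (not_le.mpr (hdu_lt x hx))
  have hdvP : ∀ x ∈ dv, x ∉ P := fun x hx hxP =>
    absurd (hPpost x hxP) (not_le.mpr (hdv_lt x hx))
  by_cases hcase : ∃ w ∈ du, w ∈ Q
  · -- B := P ++ dv
    have hzdv : (z :: dv).Chain' G := List.isChain_cons.mpr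
      ⟨by intro y hy; rw [hdvh] at hy; rw [Option.mem_some_iff] at hy; subst hy;
          exact A.sub hze1, hdvG⟩
    have hzdvlast : (z :: dv).getLast? = some v := by
      show ([z] ++ dv).getLast? = some v
      exact getLast?_append_right' hdvl
    have hB : IsDipath G (P ++ dv) s v :=
      dipath_append hP hzdv hzdvlast (nodup_of_pairwise_post hdvpair) hdvP
    obtain ⟨w, hwdu, hwQ⟩ := hcase
    obtain ⟨q1, q2, hQeq⟩ := List.append_of_mem hwQ
    have hpre : (q1 ++ [w]) <+: Q := ⟨q2, by rw [hQeq]; simp⟩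
    have hQ1 : IsDipath G (q1 ++ [w]) s w := by
      refine ⟨hQ.1.prefix hpre, ?_, List.getLast?_concat, hQ.2.2.2.sublist hpre.sublist⟩
      have hqh := hQ.2.1
      rw [hQeq, List.head?_append] at hqh
      rw [List.head?_append]
      simpa using hqh
    have hQ1post : ∀ x ∈ q1 ++ [w], A.post w ≤ A.post x :=
      ge_last_of_pairwise (hQpair.sublist hpre.sublist) (List.getLast?_concat)
    obtain ⟨t1, t2, hdueq⟩ := List.append_of_mem hwdu
    have hsuf : (w :: t2) <:+ du := ⟨t1, hdueq.symm⟩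
    have ht2nodup : t2.Nodup := (nodup_of_pairwise_post hdupair).sublist
      ((List.sublist_cons_self w t2).trans hsuf.sublist)
    have ht2lt : ∀ x ∈ t2, A.post x < A.post w :=
      (List.pairwise_cons.mp (hdupair.sublist hsuf.sublist)).1
    have ht2Q1 : ∀ x ∈ t2, x ∉ q1 ++ [w] := fun x hx hx1 =>
      absurd (hQ1post x hx1) (not_le.mpr (ht2lt x hx))
    have hwt2last : (w :: t2).getLast? = some u := by
      rw [hdueq] at hdul
      exact getLast?_of_append hdul (by simp)
    have hA : IsDipath G ((q1 ++ [w]) ++ t2) s u :=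
      dipath_append hQ1 (hduG.suffix hsuf) hwt2last ht2nodup ht2Q1
    have hQ1e : ∀ x ∈ q1 ++ [w], x ∉ dv := by
      intro x hx hy
      have h1' : A.post x ≤ A.post e1 := sub_post_le A hreache1 (hdvSub x hy)
      have h2' : A.post v ≤ A.post w := hQpost w hwQ
      have h3' : A.post w ≤ A.post e1 := le_trans (hQ1post x hx) h1'
      have hreachw : Relation.ReflTransGen A.T s w := hQreach w hwQ
      exact hSubDisj w (hduSub w hwdu) (A.post_contig hreache1 he1v hreachw h2' h3')
    refine ⟨huv, _, _, hA, hB, ?_⟩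
    intro x hx hxB
    rcases List.mem_append.mp hx with hx | hx
    · rcases List.mem_append.mp hxB with hxB | hxB
      · exact hPQ x hxB (hpre.sublist.mem hx)
      · exact absurd hxB (hQ1e x hx)
    · have hxdu : x ∈ du := hsuf.sublist.mem (List.mem_cons_of_mem w hx)
      rcases List.mem_append.mp hxB with hxB | hxB
      · exact absurd hxB (hduP x hxdu)
      · exact absurd (hdvSub x hxB) (fun h => hSubDisj x (hduSub x hxdu) h)
  · push_neg at hcase
    have hzdu : (z :: du).Chain' G := List.isChain_cons.mpr
      ⟨by intro y hy; rw [hduh] at hy; rw [Option.mem_some_iff] at hy; subst hy;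
          exact A.sub hzd1, hduG⟩
    have hzdulast : (z :: du).getLast? = some u := by
      show ([z] ++ du).getLast? = some u
      exact getLast?_append_right' hdul
    have hA : IsDipath G (P ++ du) s u :=
      dipath_append hP hzdu hzdulast (nodup_of_pairwise_post hdupair) hduP
    refine ⟨huv, _, _, hA, hQ, ?_⟩
    intro x hx hxQ
    rcases List.mem_append.mp hx with hx | hx
    · exact hPQ x hx hxQ
    · exact absurd hxQ (hcase x hx)

end main


/-- Lemma 2: with `z = LCA_{T_s}(u,v)`, `z ≠ u, v`, we have
`s ∈ J(u,v)` iff `s ∈ J(z,u)` or `s ∈ J(z,v)`. -/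
theorem stmt7 (G : V → V → Prop) (hG : Acyclic G) (s : V) (A : DFSArborescence G s)
    (s1 : V) (h1 : A.T s s1) (u v : V)
    (hu : Relation.ReflTransGen A.T s1 u) (hv : Relation.ReflTransGen A.T s1 v)
    (huv : u ≠ v) (z : V) (hz : IsTreeLCA A.T u v z) (hzu : z ≠ u) (hzv : z ≠ v) :
    IsJunction G s u v ↔ IsJunction G s z u ∨ IsJunction G s z v := by
  classical
  obtain ⟨hzu', hzv', hlca⟩ := hz
  have hs1z : Relation.ReflTransGen A.T s1 z := hlca s1 hu hv
  have hreachz : Relation.ReflTransGen A.T s z := (Relation.ReflTransGen.single h1).trans hs1z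
  constructor
  · rintro ⟨huv', P, Q, hP, hQ, hPQ⟩
    obtain ⟨c, hcc, hch, hcl⟩ := exists_dipath_rtg hreachz
    have hccG : c.Chain' G := chain'_imp_mem hcc (fun a _ b _ h => A.sub h)
    obtain ⟨-, hcpair⟩ := dipath_facts A hG hccG hch Relation.ReflTransGen.refl
    have hcnodup : c.Nodup := nodup_of_pairwise_post hcpair
    have hsc : s ∈ c := List.mem_of_mem_head? (by rw [hch]; rfl)
    have hsP : s ∈ P := List.mem_of_mem_head? (by rw [hP.2.1]; rfl)
    obtain ⟨l1, w, l2, hceq, hwPQ, hl2⟩ :=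
      exists_last_sat (p := fun x => x ∈ P ∨ x ∈ Q) ⟨s, hsc, Or.inl hsP⟩
    have hsuffix : (w :: l2) <:+ c := ⟨l1, hceq.symm⟩
    have hch2 : (w :: l2).Chain' G := hccG.suffix hsuffix
    have hlast2 : (w :: l2).getLast? = some z :=
      getLast?_of_append (by rw [← hceq]; exact hcl) (by simp)
    have hnod2 : l2.Nodup := hcnodup.sublist
      ((List.sublist_cons_self w l2).trans hsuffix.sublist)
    rcases hwPQ with hwP | hwQ
    · exact Or.inr (jout hzv hP hQ hPQ hwP hch2 hlast2 hnod2
        (fun x hx hxP => hl2 x hx (Or.inl hxP)) (fun x hx hxQ => hl2 x hx (Or.inr hxQ)))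
    · exact Or.inl (jout hzu hQ hP (fun x hx hq => hPQ x hq hx) hwQ hch2 hlast2 hnod2
        (fun x hx hxQ => hl2 x hx (Or.inr hxQ)) (fun x hx hxP => hl2 x hx (Or.inl hxP)))
  · rintro (h | h)
    · exact junction_swap (aux_imp hG A h1 hv hu huv.symm hzv' hzu'
        (fun y hy1 hy2 => hlca y hy2 hy1) hzv hzu h)
    · exact aux_imp hG A h1 hu hv huv hzu' hzv' hlca hzu hzv h
end

section
/- (Lemma 5) Let G be a DAG, T_s a DFS arborescence rooted at s, s1 a child of s, and z, w ∈ T_{s1} with z a proper ancestor of w in T_s. Let Z = (z = w'_0, ..., w'_{k-1} = w) be the tree path from z to w. If s ∉ J(z, w'_i) for all i = 1, ..., k-1, then s ∉ J(w'_i, w'_j) for all i, j = 1, ..., k-1 with i ≠ j. -/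
variable {V : Type*}

open Relation

lemma rtg_ne_tg {r : V → V → Prop} {a b : V} (h : ReflTransGen r a b) (hne : a ≠ b) :
    TransGen r a b := by
  rcases Relation.reflTransGen_iff_eq_or_transGen.1 h with rfl | h
  · exact absurd rfl hne
  · exact h

lemma no_cycle {G : V → V → Prop} (hG : Acyclic G) {a b : V} (h1 : TransGen G a b)
    (h2 : ReflTransGen G b a) : False := by
  rcases Relation.reflTransGen_iff_eq_or_transGen.1 h2 with rfl | h2
  · exact hG a h1
  · exact hG a (h1.trans h2)

lemma anc_comp {T : V → V → Prop} (hup : ∀ ⦃a b c⦄, T a b → T c b → a = c)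
    {u b : V} (hu : ReflTransGen T u b) :
    ∀ v, ReflTransGen T v b → ReflTransGen T u v ∨ ReflTransGen T v u := by
  induction hu with
  | refl => exact fun v hv => Or.inr hv
  | @tail c d hub hcd ih =>
    intro v hv
    rcases hv.cases_tail with rfl | ⟨e, hve, hed⟩
    · exact Or.inl (hub.tail hcd)
    · exact ih v (by rwa [← hup hcd hed] at hve)

lemma chain'_head_reach {r : V → V → Prop} :
    ∀ {l : List V} {a x : V}, l.Chain' r → l.head? = some a → x ∈ l → ReflTransGen r a x := by
  intro l
  induction l with
  | nil => simp
  | cons b t ih =>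
    intro a x hc hh hx
    simp only [List.head?_cons, Option.some.injEq] at hh
    subst hh
    rcases List.mem_cons.1 hx with rfl | hx
    · exact .refl
    · rcases t with _ | ⟨c, t'⟩
      · simp at hx
      · exact .head (List.isChain_cons_cons.1 hc).1 (ih (List.isChain_cons_cons.1 hc).2 rfl hx)

lemma chain'_last_reach {r : V → V → Prop} :
    ∀ {l : List V} {b x : V}, l.Chain' r → l.getLast? = some b → x ∈ l → ReflTransGen r x b := by
  intro l
  induction l with
  | nil => simp
  | cons a t ih =>
    intro b x hc hh hx
    rcases t with _ | ⟨c, t'⟩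
    · simp at hh hx
      subst hh; subst hx; exact .refl
    · rw [List.getLast?_cons_cons] at hh
      rcases List.mem_cons.1 hx with rfl | hx
      · exact .head (List.isChain_cons_cons.1 hc).1 (ih (List.isChain_cons_cons.1 hc).2 hh (by simp))
      · exact ih (List.isChain_cons_cons.1 hc).2 hh hx

lemma dipath_mem_reach {r : V → V → Prop} {l : List V} {a b x : V}
    (h : IsDipath r l a b) (hx : x ∈ l) :
    ReflTransGen r a x ∧ ReflTransGen r x b :=
  ⟨chain'_head_reach h.1 h.2.1 hx, chain'_last_reach h.1 h.2.2.1 hx⟩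

lemma dipath_mono {G T : V → V → Prop} (h : ∀ ⦃a b⦄, T a b → G a b) {l : List V} {a b : V}
    (hl : IsDipath T l a b) : IsDipath G l a b :=
  ⟨hl.1.imp (fun _ _ hab => h hab), hl.2⟩

lemma dipath_head_mem {r : V → V → Prop} {l : List V} {a b : V} (h : IsDipath r l a b) :
    a ∈ l := by
  rcases l with _ | ⟨c, t⟩
  · simp [IsDipath] at h
  · have := h.2.1; simp at this; simp [this]

lemma dipath_not_mem_tail {r : V → V → Prop} {l : List V} {a b : V} (h : IsDipath r l a b) :
    a ∉ l.tail := by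
  rcases l with _ | ⟨c, t⟩
  · simp
  · have := h.2.1; simp at this; subst this
    exact (List.nodup_cons.1 h.2.2.2).1

 

lemma dipath_append_s12 {G : V → V → Prop} {p q : List V} {a b c : V}
    (hp : IsDipath G p a b) (hq : IsDipath G q b c)
    (hdisj : ∀ u, u ∈ p → u ∈ q → u = b) : IsDipath G (p ++ q.tail) a c := by
  rcases q with _ | ⟨e, q'⟩
  · simp [IsDipath] at hq
  · have he : e = b := by have := hq.2.1; simpa using this
    subst he
    rcases q' with _ | ⟨f, q''⟩
    · have : c = e := by have := hq.2.2.1; simpa using this.symm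
      subst this
      simpa using hp
    · have hpe : p ≠ [] := by
        intro h; subst h; simp [IsDipath] at hp
      simp only [List.tail_cons]
      refine ⟨?_, ?_, ?_, ?_⟩
      · refine List.IsChain.append hp.1 (List.isChain_cons_cons.1 hq.1).2 ?_
        intro x hx y hy
        rw [hp.2.2.1] at hx
        simp only [List.head?_cons, Option.mem_def, Option.some.injEq] at hx hy
        subst hx; subst hy
        exact (List.isChain_cons_cons.1 hq.1).1
      · rw [List.head?_append, hp.2.1]; rfl
      · rw [List.getLast?_append_of_ne_nil _ (by simp : (f :: q'') ≠ [])]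
        have := hq.2.2.1
        rwa [List.getLast?_cons_cons] at this
      · rw [List.nodup_append]
        refine ⟨hp.2.2.2, (List.nodup_cons.1 hq.2.2.2).2, ?_⟩
        intro u hu u' hu' heq; subst heq
        have := hdisj u hu (by simp [hu'])
        subst this
        exact (List.nodup_cons.1 hq.2.2.2).1 hu'

lemma dipath_prefix {G : V → V → Prop} {p : List V} {a c x : V}
    (hp : IsDipath G p a c) (hx : x ∈ p) :
    ∃ l₁ l₂, p = l₁ ++ x :: l₂ ∧ IsDipath G (l₁ ++ [x]) a x := by
  obtain ⟨l₁, l₂, hsplit⟩ := List.append_of_mem hx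
  refine ⟨l₁, l₂, hsplit, ?_, ?_, List.getLast?_concat, ?_⟩
  · exact hp.1.prefix ⟨l₂, by simp [hsplit]⟩
  · have := hp.2.1
    rw [hsplit] at this
    rcases l₁ with _ | ⟨g, t⟩ <;> simpa using this
  · have hsl : List.Sublist (l₁ ++ [x]) p := by
      rw [hsplit]
      exact (List.cons_sublist_cons.2 (List.nil_sublist l₂)).append_left l₁
    exact hsl.nodup hp.2.2.2

lemma exists_treePath {G T : V → V → Prop} (hG : Acyclic G) (hsub : ∀ ⦃a b⦄, T a b → G a b)
    {a b : V} (h : Relation.ReflTransGen T a b) : ∃ l, IsDipath T l a b := by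
  induction h with
  | refl => exact ⟨[a], List.isChain_singleton a, rfl, rfl, List.nodup_singleton a⟩
  | @tail c d hac hcd ih =>
    obtain ⟨l, hl⟩ := ih
    refine ⟨l ++ [d], ?_, ?_, List.getLast?_concat, ?_⟩
    · refine List.IsChain.append hl.1 (List.isChain_singleton d) ?_
      intro x hx y hy
      rw [hl.2.2.1] at hx
      simp only [Option.mem_def, Option.some.injEq, List.head?_cons] at hx hy
      subst hx; subst hy; exact hcd
    · have hne : l ≠ [] := by intro h; subst h; simp [IsDipath] at hl
      rw [List.head?_append, hl.2.1]; rfl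
    · rw [List.nodup_append]
      refine ⟨hl.2.2.2, List.nodup_singleton d, ?_⟩
      intro u hu u' hu' heq; subst heq
      simp at hu'
      subst hu'
      have h1 : Relation.ReflTransGen T u c := chain'_last_reach hl.1 hl.2.2.1 hu
      exact hG u (TransGen.mono (r := T) (p := G) hsub _ _ ((Relation.TransGen.tail' h1 hcd)))

lemma chain'_get_reach {r : V → V → Prop} {l : List V} (hc : l.Chain' r) :
    ∀ {m n : ℕ} (hm : m ≤ n) (hn : n < l.length),
      Relation.ReflTransGen r (l.get ⟨m, lt_of_le_of_lt hm hn⟩) (l.get ⟨n, hn⟩) := by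
  intro m n
  induction n with
  | zero => intro hm hn; interval_cases m; exact .refl
  | succ k ih =>
    intro hm hn
    rcases Nat.eq_or_lt_of_le hm with rfl | hm'
    · exact .refl
    · have hk : k < l.length := by omega
      exact (ih (by omega) hk).tail (List.isChain_iff_getElem.1 hc k (by omega))

lemma junction_symm {G : V → V → Prop} {s u v : V} (h : IsJunction G s u v) :
    IsJunction G s v u := by
  obtain ⟨hne, p, q, hp, hq, hd⟩ := h
  exact ⟨hne.symm, q, p, hq, hp, fun x hx hx' => hd x hx' hx⟩

lemma key (G : V → V → Prop) (hG : Acyclic G) (s : V) (A : DFSArborescence G s)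
    (s1 : V) (h1 : A.T s s1) (z w : V)
    (hz : Relation.ReflTransGen A.T s1 z) (hw : Relation.ReflTransGen A.T s1 w)
    (Z : List V) (hZ : IsDipath A.T Z z w) (hlen : 2 ≤ Z.length)
    (hnot : ∀ i (hi : i < Z.length), 0 < i → ¬ IsJunction G s z (Z.get ⟨i, hi⟩)) :
    ∀ i (hi : i < Z.length) j (hj : j < Z.length), 0 < i → 0 < j → i < j →
      ¬ IsJunction G s (Z.get ⟨i, hi⟩) (Z.get ⟨j, hj⟩) := by
  classical
  intro i hi j hj hi0 hj0 hij hJ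
  obtain ⟨hne, P, Q, hP, hQ, hPQ⟩ := hJ
  set wi := Z.get ⟨i, hi⟩ with hwidef
  set wj := Z.get ⟨j, hj⟩ with hwjdef
  have h0lt : 0 < Z.length := by omega
  have hz0 : Z.get ⟨0, h0lt⟩ = z := by
    have h0 : Z ≠ [] := List.length_pos_iff.1 h0lt
    have := hZ.2.1
    rw [List.head?_eq_head h0] at this
    rw [List.get_mk_zero]
    exact Option.some.inj this
  have hz_wi : Relation.ReflTransGen A.T z wi := by
    rw [← hz0]; exact chain'_get_reach hZ.1 (Nat.zero_le i) hi
  have hz_wj : Relation.ReflTransGen A.T z wj := by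
    rw [← hz0]; exact chain'_get_reach hZ.1 (Nat.zero_le j) hj
  have hwi_wj : Relation.ReflTransGen A.T wi wj := chain'_get_reach hZ.1 (le_of_lt hij) hj
  have hz_ne_wj : z ≠ wj := by
    rw [← hz0, hwjdef]
    intro h
    have := (hZ.2.2.2.get_inj_iff).1 h
    simp only [Fin.mk.injEq] at this
    omega
  have hz_ne_wi : z ≠ wi := by
    rw [← hz0, hwidef]
    intro h
    have := (hZ.2.2.2.get_inj_iff).1 h
    simp only [Fin.mk.injEq] at this
    omega
  have hsz : Relation.ReflTransGen A.T s z := Relation.ReflTransGen.head h1 hz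
  have hanti : ∀ {u v : V}, Relation.ReflTransGen A.T u v →
      Relation.ReflTransGen A.T v u → u = v := by
    intro u v h2 h3
    by_contra hne'
    exact no_cycle hG (TransGen.mono (r := A.T) (p := G) A.sub _ _ (rtg_ne_tg h2 hne'))
      (ReflTransGen.mono (r := A.T) (p := G) A.sub _ _ h3)
  have hroots : ∀ u, Relation.ReflTransGen A.T u s → u = s := by
    intro u h
    rcases h.cases_tail with h' | ⟨c, _, hc⟩
    · exact h'.symm
    · exact absurd hc (A.root_no_parent c)
  have hsreach : ∀ u, Relation.ReflTransGen A.T u z → Relation.ReflTransGen A.T s u := by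
    intro u h
    rcases anc_comp A.unique_parent h s hsz with h' | h'
    · have := hroots u h'; subst this; exact .refl
    · exact h'
  have sel : ∀ L : List V, s ∈ L → ∃ x, x ∈ L ∧ Relation.ReflTransGen A.T x z ∧
      ∀ u ∈ L, Relation.ReflTransGen A.T u z → Relation.ReflTransGen A.T u x := by
    intro L hsL
    have hne' : (L.toFinset.filter (fun u => Relation.ReflTransGen A.T u z)).Nonempty :=
      ⟨s, by simp [hsL, hsz]⟩
    obtain ⟨x, hxS, hxmin⟩ := Finset.exists_min_image _ A.post hne'
    simp only [Finset.mem_filter, List.mem_toFinset] at hxS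
    refine ⟨x, hxS.1, hxS.2, ?_⟩
    intro u huL huz
    rcases anc_comp A.unique_parent hxS.2 u huz with hxu | hux
    · by_cases hxe : x = u
      · subst hxe; exact .refl
      · exfalso
        have hlt : A.post u < A.post x := A.post_desc (hsreach x hxS.2) (rtg_ne_tg hxu hxe)
        have hle : A.post x ≤ A.post u := hxmin u (by simp [huL, huz])
        omega
    · exact hux
  obtain ⟨x, hxP, hxz, hxmax⟩ := sel P (dipath_head_mem hP)
  obtain ⟨y, hyQ, hyz, hymax⟩ := sel Q (dipath_head_mem hQ)
  obtain ⟨tpz, htpz⟩ := exists_treePath hG A.sub hsz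
  by_cases hys : y = s
  · subst hys
    refine hnot j hj hj0 ⟨hz_ne_wj, tpz, Q, dipath_mono A.sub htpz, hQ, ?_⟩
    intro u hu huQ
    exact hroots u (hymax u huQ (dipath_mem_reach htpz hu).2)
  by_cases hxs : x = s
  · subst hxs
    refine hnot i hi hi0 ⟨hz_ne_wi, tpz, P, dipath_mono A.sub htpz, hP, ?_⟩
    intro u hu huP
    exact hroots u (hxmax u huP (dipath_mem_reach htpz hu).2)
  rcases anc_comp A.unique_parent hxz y hyz with hxy' | hyx'
  · -- x →* y : use Q-prefix to y, tree path y→z ; and P extended to wj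
    obtain ⟨l₁, l₂, hsplit, hQpfx⟩ := dipath_prefix hQ hyQ
    have hQpfx_sub : ∀ u, u ∈ l₁ ++ [y] → u ∈ Q := by
      intro u hu
      rw [hsplit]
      rcases List.mem_append.1 hu with h | h
      · exact List.mem_append.2 (Or.inl h)
      · simp only [List.mem_singleton] at h
        subst h; simp
    obtain ⟨tpy, htpy⟩ := exists_treePath hG A.sub hyz
    obtain ⟨tw, htw⟩ := exists_treePath hG A.sub hwi_wj
    have hR : IsDipath G ((l₁ ++ [y]) ++ tpy.tail) s z := by
      refine dipath_append_s12 hQpfx (dipath_mono A.sub htpy) ?_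
      intro u hu hut
      exact hanti (hymax u (hQpfx_sub u hu) (dipath_mem_reach htpy hut).2)
        (dipath_mem_reach htpy hut).1
    have hP' : IsDipath G (P ++ tw.tail) s wj := by
      refine dipath_append_s12 hP (dipath_mono A.sub htw) ?_
      intro u huP hut
      by_contra hne'
      exact no_cycle hG
        (TransGen.mono (r := A.T) (p := G) A.sub _ _
          (rtg_ne_tg (dipath_mem_reach htw hut).1 (fun h => hne' h.symm)))
        (chain'_last_reach hP.1 hP.2.2.1 huP)
    refine hnot j hj hj0 ⟨hz_ne_wj, _, _, hR, hP', ?_⟩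
    intro u hu hu'
    rcases List.mem_append.1 hu with huR | huR
    · rcases List.mem_append.1 hu' with huP | huP
      · exact hPQ u huP (hQpfx_sub u huR)
      · exfalso
        have h2 : u ∈ tw := List.mem_of_mem_tail huP
        have hne2 : u ≠ wi := fun h => dipath_not_mem_tail htw (h ▸ huP)
        have h3 : Relation.TransGen A.T y u :=
          Relation.TransGen.trans_right (hyz.trans hz_wi)
            (rtg_ne_tg (dipath_mem_reach htw h2).1 (Ne.symm hne2))
        exact no_cycle hG (TransGen.mono (r := A.T) (p := G) A.sub _ _ h3)
          (chain'_last_reach hQpfx.1 hQpfx.2.2.1 huR)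
    · exfalso
      have h2 : u ∈ tpy := List.mem_of_mem_tail huR
      have hne2 : u ≠ y := fun h => dipath_not_mem_tail htpy (h ▸ huR)
      have hyu : Relation.TransGen A.T y u :=
        rtg_ne_tg (dipath_mem_reach htpy h2).1 (Ne.symm hne2)
      rcases List.mem_append.1 hu' with huP | huP
      · have hux : Relation.ReflTransGen A.T u x := hxmax u huP (dipath_mem_reach htpy h2).2
        exact no_cycle hG (TransGen.mono (r := A.T) (p := G) A.sub _ _ hyu)
          (ReflTransGen.mono (r := A.T) (p := G) A.sub _ _ (hux.trans hxy'))
      · have h4 : u ∈ tw := List.mem_of_mem_tail huP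
        have hne4 : u ≠ wi := fun h => dipath_not_mem_tail htw (h ▸ huP)
        exact no_cycle hG
          (TransGen.mono (r := A.T) (p := G) A.sub _ _ (rtg_ne_tg (dipath_mem_reach htw h4).1 (Ne.symm hne4)))
          (ReflTransGen.mono (r := A.T) (p := G) A.sub _ _ ((dipath_mem_reach htpy h2).2.trans hz_wi))
  · -- y →* x : use P-prefix to x, tree path x→z ; pair with Q
    obtain ⟨l₁, l₂, hsplit, hPpfx⟩ := dipath_prefix hP hxP
    have hPpfx_sub : ∀ u, u ∈ l₁ ++ [x] → u ∈ P := by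
      intro u hu
      rw [hsplit]
      rcases List.mem_append.1 hu with h | h
      · exact List.mem_append.2 (Or.inl h)
      · simp only [List.mem_singleton] at h
        subst h; simp
    obtain ⟨tpx, htpx⟩ := exists_treePath hG A.sub hxz
    have hR : IsDipath G ((l₁ ++ [x]) ++ tpx.tail) s z := by
      refine dipath_append_s12 hPpfx (dipath_mono A.sub htpx) ?_
      intro u hu hut
      exact hanti (hxmax u (hPpfx_sub u hu) (dipath_mem_reach htpx hut).2)
        (dipath_mem_reach htpx hut).1
    refine hnot j hj hj0 ⟨hz_ne_wj, _, _, hR, hQ, ?_⟩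
    intro u hu huQ
    rcases List.mem_append.1 hu with huR | huR
    · exact hPQ u (hPpfx_sub u huR) huQ
    · exfalso
      have h2 : u ∈ tpx := List.mem_of_mem_tail huR
      have hne2 : u ≠ x := fun h => dipath_not_mem_tail htpx (h ▸ huR)
      have hxu : Relation.TransGen A.T x u :=
        rtg_ne_tg (dipath_mem_reach htpx h2).1 (Ne.symm hne2)
      have huy : Relation.ReflTransGen A.T u y := hymax u huQ (dipath_mem_reach htpx h2).2
      exact no_cycle hG (TransGen.mono (r := A.T) (p := G) A.sub _ _ hxu)
        (ReflTransGen.mono (r := A.T) (p := G) A.sub _ _ (huy.trans hyx'))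


/-- Lemma 5: if `s ∉ J(z, w'_i)` for every vertex `w'_i` (i ≥ 1) of the tree path from
`z` to `w`, then `s ∉ J(w'_i, w'_j)` for all such `i ≠ j`. -/
theorem stmt12 (G : V → V → Prop) (hG : Acyclic G) (s : V) (A : DFSArborescence G s)
    (s1 : V) (h1 : A.T s s1) (z w : V)
    (hz : Relation.ReflTransGen A.T s1 z) (hw : Relation.ReflTransGen A.T s1 w)
    (Z : List V) (hZ : IsDipath A.T Z z w) (hlen : 2 ≤ Z.length)
    (hnot : ∀ i (hi : i < Z.length), 0 < i → ¬ IsJunction G s z (Z.get ⟨i, hi⟩)) :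
    ∀ i (hi : i < Z.length) j (hj : j < Z.length), 0 < i → 0 < j → i ≠ j →
      ¬ IsJunction G s (Z.get ⟨i, hi⟩) (Z.get ⟨j, hj⟩) := by
  intro i hi j hj hi0 hj0 hij hJ
  rcases Nat.lt_or_ge i j with h | h
  · exact key G hG s A s1 h1 z w hz hw Z hZ hlen hnot i hi j hj hi0 hj0 h hJ
  · exact key G hG s A s1 h1 z w hz hw Z hZ hlen hnot j hj i hi hj0 hi0
      (lt_of_le_of_ne h (Ne.symm hij)) (junction_symm hJ)
end
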